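/- Let G be a finite simple graph with n vertices and average degree Γ = 2|E(G)|/n. Then the number of acyclic orientations of G is at most (Γ + 1)^n; equivalently, if D is an orientation of G chosen uniformly at random (each edge directed independently with probability 1/2 in each direction), then the probability that D is acyclic is at most ((Γ + 1)/2^(Γ/2))^n. -/

import Mathlib

/-- A digraph (given as a relation) is acyclic if it has no directed closed walk. -/
def DiAcyclic {V : Type*} (D : V → V → Prop) : Prop :=
  ∀ v, ¬ Relation.TransGen D v v

/-- A colouring is a dicolouring if every colour class induces an acyclic subdigraph. -/
def IsDicolouring {V α : Type*} (D : V → V → Prop) (φ : V → α) : Prop :=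
  ∀ c : α, DiAcyclic (fun x y => D x y ∧ φ x = c ∧ φ y = c)

/-- `D` is an orientation of the simple graph `G`: every arc of `D` is an edge of `G`,
and every edge of `G` carries exactly one of its two possible arcs. -/
def IsOrientationOf {V : Type*} (D : V → V → Prop) (G : SimpleGraph V) : Prop :=
  (∀ u v, D u v → G.Adj u v) ∧ ∀ u v, G.Adj u v → (D u v ↔ ¬ D v u)

/-- The dichoosability (list dichromatic number) of a digraph: the least `k` such that
for every list assignment giving each vertex at least `k` positive integers, there is a
dicolouring choosing a colour from each list. -/
noncomputable def dichoos {V : Type*} (D : V → V → Prop) : ℕ :=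
  sInf {k | ∀ L : V → Finset ℕ+, (∀ v, k ≤ (L v).card) →
    ∃ φ : V → ℕ+, (∀ v, φ v ∈ L v) ∧ IsDicolouring D φ}
attribute [local instance] Classical.propDecidable

open Finset

private lemma exists_closed {V : Type} [Fintype V] {S : V → V → Prop}
    (h : ∀ u v, S u v → ∃ w, S v w) {u v : V} (huv : S u v) :
    ∃ x, Relation.TransGen S x x := by
  let g : ℕ → {x : V // ∃ w, S x w} := fun n =>
    Nat.rec ⟨v, h u v huv⟩ (fun _ p => ⟨p.2.choose, h p.1 _ p.2.choose_spec⟩) n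
  have hstep : ∀ n, S (g n).1 (g (n+1)).1 := fun n => (g n).2.choose_spec
  have htrans : ∀ n m, m < n → Relation.TransGen S (g m).1 (g n).1 := by
    intro n
    induction n with
    | zero => omega
    | succ k ih =>
      intro m hm
      rcases Nat.lt_succ_iff_lt_or_eq.mp hm with h' | h'
      · exact (ih m h').tail (hstep k)
      · subst h'; exact Relation.TransGen.single (hstep m)
  have hni : ¬ Function.Injective (fun n : Fin (Fintype.card V + 1) => (g n).1) := by
    intro hinj
    have := Fintype.card_le_of_injective _ hinj
    simp at this
  rw [Function.not_injective_iff] at hni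
  obtain ⟨a, b, hab, hne⟩ := hni
  rcases hne.lt_or_gt with h' | h'
  · exact ⟨(g b).1, (hab ▸ htrans b a h' : _)⟩
  · exact ⟨(g a).1, (hab ▸ htrans a b h' : _)⟩

private lemma od_inj {V : Type} [Fintype V] {G : SimpleGraph V} {D1 D2 : V → V → Prop}
    (h1 : IsOrientationOf D1 G) (h2 : IsOrientationOf D2 G) (ha : DiAcyclic D1)
    (heq : ∀ v, (univ.filter fun w => D1 v w).card = (univ.filter fun w => D2 v w).card) :
    D1 = D2 := by
  by_contra hne
  set S : V → V → Prop := fun x y => D1 x y ∧ D2 y x with hS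
  have hbal : ∀ v, (univ.filter fun w => S v w).card = (univ.filter fun w => S w v).card := by
    intro v
    have e1 : (univ.filter fun w => D1 v w).card
        = (univ.filter fun w => D1 v w ∧ D2 v w).card
          + (univ.filter fun w => D1 v w ∧ ¬ D2 v w).card := by
      rw [← Finset.filter_filter, ← Finset.filter_filter]
      exact (Finset.card_filter_add_card_filter_not
        (s := univ.filter fun w => D1 v w) (p := fun w => D2 v w)).symm
    have e2 : (univ.filter fun w => D2 v w).card
        = (univ.filter fun w => D2 v w ∧ D1 v w).card
          + (univ.filter fun w => D2 v w ∧ ¬ D1 v w).card := by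
      rw [← Finset.filter_filter, ← Finset.filter_filter]
      exact (Finset.card_filter_add_card_filter_not
        (s := univ.filter fun w => D2 v w) (p := fun w => D1 v w)).symm
    have eA : (univ.filter fun w => D1 v w ∧ D2 v w) = (univ.filter fun w => D2 v w ∧ D1 v w) :=
      Finset.filter_congr (fun w _ => by tauto)
    have ident1 : (univ.filter fun w => S v w) = (univ.filter fun w => D1 v w ∧ ¬ D2 v w) := by
      apply Finset.filter_congr
      intro w _
      simp only [hS]
      constructor
      · rintro ⟨a, b⟩
        exact ⟨a, fun c => (h2.2 v w (h1.1 v w a)).mp c b⟩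
      · rintro ⟨a, b⟩
        refine ⟨a, ?_⟩
        by_contra hb
        exact b ((h2.2 v w (h1.1 v w a)).mpr hb)
    have ident2 : (univ.filter fun w => S w v) = (univ.filter fun w => D2 v w ∧ ¬ D1 v w) := by
      apply Finset.filter_congr
      intro w _
      simp only [hS]
      constructor
      · rintro ⟨a, b⟩
        exact ⟨b, fun c => (h1.2 v w (h2.1 v w b)).mp c a⟩
      · rintro ⟨a, b⟩
        refine ⟨?_, a⟩
        by_contra c
        exact b ((h1.2 v w (h2.1 v w a)).mpr c)
    rw [ident1, ident2]
    rw [eA] at e1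
    have := heq v
    omega
  have hforward : ∀ u v, S u v → ∃ w, S v w := by
    intro u v huv
    have hin : 0 < (univ.filter fun w => S w v).card :=
      Finset.card_pos.mpr ⟨u, Finset.mem_filter.mpr ⟨Finset.mem_univ u, huv⟩⟩
    have hout : 0 < (univ.filter fun w => S v w).card := by rw [hbal v]; exact hin
    obtain ⟨w, hw⟩ := Finset.card_pos.mp hout
    exact ⟨w, (Finset.mem_filter.mp hw).2⟩
  have hex : ∃ u v, ¬ (D1 u v ↔ D2 u v) := by
    by_contra hno
    push_neg at hno
    exact hne (funext fun u => funext fun v => propext (hno u v))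
  obtain ⟨u, v, h⟩ := hex
  have hSne : ∃ a b, S a b := by
    by_cases h1uv : D1 u v
    · have h2n : ¬ D2 u v := fun c => h ⟨fun _ => c, fun _ => h1uv⟩
      have : D2 v u := by
        by_contra c
        exact h2n ((h2.2 u v (h1.1 u v h1uv)).mpr c)
      exact ⟨u, v, h1uv, this⟩
    · have h2uv : D2 u v := by
        by_contra c
        exact h ⟨fun a => absurd a h1uv, fun a => absurd a c⟩
      have : D1 v u := by
        by_contra c
        exact h1uv ((h1.2 u v (h2.1 u v h2uv)).mpr c)
      exact ⟨v, u, this, h2uv⟩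
  obtain ⟨a, b, hab⟩ := hSne
  obtain ⟨x, hx⟩ := exists_closed hforward hab
  exact ha x (Relation.TransGen.mono (p := D1) (fun p q (hpq : S p q) => hpq.1) x x hx)

private lemma card_le_prod (V : Type) [Fintype V] (G : SimpleGraph V) :
    (Nat.card {D : V → V → Prop // IsOrientationOf D G ∧ DiAcyclic D}) ≤
      ∏ v, (G.degree v + 1) := by
  classical
  have hdeg : ∀ (D : V → V → Prop), IsOrientationOf D G → ∀ v,
      (univ.filter fun w => D v w).card < G.degree v + 1 := by
    intro D hD v
    have hsub : (univ.filter fun w => D v w) ⊆ G.neighborFinset v := by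
      intro w hw
      rw [SimpleGraph.mem_neighborFinset]
      exact hD.1 v w (Finset.mem_filter.mp hw).2
    exact Nat.lt_succ_of_le (Finset.card_le_card hsub)
  let f : {D : V → V → Prop // IsOrientationOf D G ∧ DiAcyclic D} →
      (∀ v : V, Fin (G.degree v + 1)) :=
    fun D v => ⟨(univ.filter fun w => D.1 v w).card, hdeg D.1 D.2.1 v⟩
  have hf : Function.Injective f := by
    intro D1 D2 h
    ext1
    apply od_inj D1.2.1 D2.2.1 D1.2.2
    intro v
    exact congrArg Fin.val (congrFun h v)
  calc Nat.card {D : V → V → Prop // IsOrientationOf D G ∧ DiAcyclic D}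
      ≤ Nat.card (∀ v : V, Fin (G.degree v + 1)) := Nat.card_le_card_of_injective f hf
    _ = ∏ v, (G.degree v + 1) := by simp [Nat.card_pi]

/-- Counting acyclic orientations: if `G` has `n` vertices and average degree
`Γ = 2|E(G)|/n`, then the number of acyclic orientations of `G` is at most `(Γ+1)^n`;
equivalently, a uniformly random orientation (out of the `2^|E(G)|` orientations) is
acyclic with probability at most `((Γ+1)/2^(Γ/2))^n`. -/
theorem stmt6 (V : Type) [Fintype V] (G : SimpleGraph V) (Γ : ℝ)
    (hΓ : Γ = 2 * G.edgeSet.ncard / Fintype.card V) :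
    (Nat.card {D : V → V → Prop // IsOrientationOf D G ∧ DiAcyclic D} : ℝ) ≤
        (Γ + 1) ^ Fintype.card V ∧
    (Nat.card {D : V → V → Prop // IsOrientationOf D G ∧ DiAcyclic D} : ℝ) /
        2 ^ G.edgeSet.ncard ≤ ((Γ + 1) / 2 ^ (Γ / 2)) ^ Fintype.card V := by
  classical
  have hcard := card_le_prod V G
  by_cases hn0 : Fintype.card V = 0
  · have hV : IsEmpty V := Fintype.card_eq_zero_iff.mp hn0
    have hm0 : G.edgeSet.ncard = 0 := by
      have : G.edgeSet = ∅ := Set.eq_empty_of_isEmpty _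
      simp [this]
    have huniv : (univ : Finset V) = ∅ := Finset.univ_eq_empty
    rw [huniv, Finset.prod_empty] at hcard
    have hc1 : (Nat.card {D : V → V → Prop // IsOrientationOf D G ∧ DiAcyclic D} : ℝ) ≤ 1 := by
      exact_mod_cast hcard
    constructor
    · rw [hn0, pow_zero]; exact hc1
    · rw [hn0, hm0, pow_zero, pow_zero, div_one]; exact hc1
  · have hnR : (0:ℝ) < Fintype.card V := by positivity
    set n := Fintype.card V with hn
    set m := G.edgeSet.ncard with hm
    have hnne : (n:ℝ) ≠ 0 := ne_of_gt hnR
    have hsum : ∑ v, G.degree v = 2 * m := by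
      rw [hm, Set.ncard_eq_toFinset_card']
      exact G.sum_degrees_eq_twice_card_edges
    set z : V → ℝ := fun v => (G.degree v : ℝ) + 1 with hz
    have hzn : ∀ v ∈ (univ : Finset V), (0:ℝ) ≤ z v := fun v _ => by positivity
    have hwn : ∀ v ∈ (univ : Finset V), (0:ℝ) ≤ ((n:ℝ))⁻¹ := fun v _ => by positivity
    have hw1 : ∑ _v ∈ (univ : Finset V), ((n:ℝ))⁻¹ = 1 := by
      rw [Finset.sum_const, Finset.card_univ, ← hn, nsmul_eq_mul, mul_inv_cancel₀ hnne]
    have hgm := Real.geom_mean_le_arith_mean_weighted univ (fun _ => ((n:ℝ))⁻¹) z hwn hw1 hzn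
    have hzs : ∑ v, z v = 2 * (m:ℝ) + n := by
      simp only [hz]
      rw [Finset.sum_add_distrib, Finset.sum_const, Finset.card_univ, ← hn, nsmul_eq_mul, mul_one,
        ← Nat.cast_sum, hsum]
      push_cast
      ring
    have harith : ∑ v ∈ (univ : Finset V), ((n:ℝ))⁻¹ * z v = Γ + 1 := by
      rw [← Finset.mul_sum, hzs, hΓ]
      field_simp
    rw [harith] at hgm
    have hΓ0 : 0 ≤ Γ := by rw [hΓ]; positivity
    have key : ∏ v, z v ≤ (Γ + 1) ^ n := by
      have hstep : ∀ v ∈ (univ : Finset V), z v = (z v ^ ((n:ℝ))⁻¹) ^ n := fun v hv =>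
        (Real.rpow_inv_natCast_pow (hzn v hv) hn0).symm
      calc ∏ v, z v = ∏ v, (z v ^ ((n:ℝ))⁻¹) ^ n := Finset.prod_congr rfl hstep
        _ = (∏ v, z v ^ ((n:ℝ))⁻¹) ^ n := Finset.prod_pow _ _ _
        _ ≤ (Γ + 1) ^ n := pow_le_pow_left₀ (Finset.prod_nonneg
              (fun v hv => Real.rpow_nonneg (hzn v hv) _)) hgm n
    have first : (Nat.card {D : V → V → Prop // IsOrientationOf D G ∧ DiAcyclic D} : ℝ) ≤
        (Γ + 1) ^ n := by
      refine le_trans ?_ key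
      calc (Nat.card {D : V → V → Prop // IsOrientationOf D G ∧ DiAcyclic D} : ℝ)
          ≤ ((∏ v, (G.degree v + 1) : ℕ) : ℝ) := by exact_mod_cast hcard
        _ = ∏ v, z v := by push_cast [hz]; rfl
    refine ⟨first, ?_⟩
    have h2pow : ((2:ℝ) ^ (Γ/2)) ^ n = 2 ^ m := by
      rw [← Real.rpow_natCast ((2:ℝ) ^ (Γ/2)) n, ← Real.rpow_mul (by norm_num : (0:ℝ) ≤ 2)]
      have : Γ/2 * n = m := by rw [hΓ]; field_simp
      rw [this, Real.rpow_natCast]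
    rw [div_pow, h2pow]
    gcongr
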